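/- Under the standing assumptions on φ and φ_λ, let 𝒟 := {x ∈ H : ∃ z ∈ ℝ^m with S(x,z) < h(x)}. Then for every sequence λ_k → 0⁺ and every sequence x_k converging strongly to a point x ∈ 𝒟, lim_{k→∞} φ_{λ_k}(x_k) = φ(x). (Theorem 3.1(c).) -/

import Mathlib

open Filter Topology MeasureTheory

/-- The Moreau envelope of a function `S : H × E → ℝ` (in two arguments) with parameter
`lam`, for the Hilbert norm of the product. -/
noncomputable def moreauEnv2 {H E : Type*} [NormedAddCommGroup H] [InnerProductSpace ℝ H]
    [NormedAddCommGroup E] [InnerProductSpace ℝ E]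
    (S : H → E → ℝ) (lam : ℝ) (x : H) (z : E) : ℝ :=
  ⨅ u : H × E, (S u.1 u.2 + (‖x - u.1‖ ^ 2 + ‖z - u.2‖ ^ 2) / (2 * lam))

/-- Weak (sequential) convergence in a Hilbert space: `⟪x_k, y⟫ → ⟪x₀, y⟫` for every `y`. -/
def WeakSeqTendsto {H : Type*} [NormedAddCommGroup H] [InnerProductSpace ℝ H]
    (x : ℕ → H) (x₀ : H) : Prop :=
  ∀ y : H, Tendsto (fun k => (inner ℝ (x k) y : ℝ)) atTop (𝓝 (inner ℝ x₀ y))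

section Aux

lemma quad_bound {lam : ℝ} (hlam : 0 < lam) (c r : ℝ) :
    -(lam * c ^ 2) / 2 ≤ r ^ 2 / (2 * lam) - c * r := by
  have h := sq_nonneg (r - lam * c)
  have h2 : 0 < 2 * lam := by linarith
  have key : 0 ≤ ((r - lam * c) ^ 2) / (2 * lam) := by positivity
  have expand : ((r - lam * c) ^ 2) / (2 * lam) = r ^ 2 / (2 * lam) - c * r + lam * c ^ 2 / 2 := by
    field_simp
    ring
  linarith [expand ▸ key]

/-- A convex continuous function on a normed space admits an exact affine minorant at
every point. -/
lemma exists_affine_minorant {W : Type*} [NormedAddCommGroup W] [NormedSpace ℝ W]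
    {f : W → ℝ} (hf : ConvexOn ℝ Set.univ f) (hc : Continuous f) (w₀ : W) :
    ∃ L : W →L[ℝ] ℝ, ∀ w, f w₀ + L (w - w₀) ≤ f w := by
  set s : Set (W × ℝ) := {p : W × ℝ | f p.1 < p.2} with hs
  have hsopen : IsOpen s := by
    have : Continuous fun p : W × ℝ => p.2 - f p.1 :=
      continuous_snd.sub (hc.comp continuous_fst)
    have : IsOpen {p : W × ℝ | 0 < p.2 - f p.1} := isOpen_lt continuous_const this
    convert this using 1
    ext p; simp [hs, sub_pos]
  have hsconv : Convex ℝ s := by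
    intro p hp q hq a b ha hb hab
    simp only [hs, Set.mem_setOf_eq] at hp hq ⊢
    have h1 : f (a • p.1 + b • q.1) ≤ a * f p.1 + b * f q.1 := by
      simpa [smul_eq_mul] using hf.2 (Set.mem_univ p.1) (Set.mem_univ q.1) ha hb hab
    have h2 : a * f p.1 + b * f q.1 < a * p.2 + b * q.2 := by
      rcases eq_or_lt_of_le ha with rfl | ha'
      · simp only [zero_mul, zero_add]
        have hb1 : b = 1 := by linarith
        nlinarith
      · rcases eq_or_lt_of_le hb with rfl | hb'
        · have ha1 : a = 1 := by linarith
          nlinarith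
        · nlinarith
    calc f ((a • p + b • q).1) = f (a • p.1 + b • q.1) := rfl
      _ < a * p.2 + b * q.2 := lt_of_le_of_lt h1 h2
      _ = (a • p + b • q).2 := rfl
  have hnot : (w₀, f w₀) ∉ s := by simp [hs]
  obtain ⟨F, hF⟩ := geometric_hahn_banach_open_point hsconv hsopen hnot
  set g : W →L[ℝ] ℝ := F.comp (ContinuousLinearMap.inl ℝ W ℝ) with hg
  set c : ℝ := F (0, 1) with hcdef
  have hsplit : ∀ (w : W) (t : ℝ), F (w, t) = g w + t * c := by
    intro w t
    have : (w, t) = (w, (0 : ℝ)) + t • ((0 : W), (1 : ℝ)) := by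
      simp [Prod.ext_iff]
    rw [this, map_add, F.map_smul]
    have h1 : F (w, (0:ℝ)) = g w := rfl
    rw [h1]
    simp [hcdef, smul_eq_mul]
  have hcneg : c < 0 := by
    have h1 : ((w₀ : W), f w₀ + 1) ∈ s := by simp [hs]
    have h2 := hF _ h1
    rw [hsplit, hsplit] at h2
    nlinarith
  have key : ∀ w, g w + c * f w ≤ g w₀ + c * f w₀ := by
    intro w
    by_contra hlt
    push_neg at hlt
    set ε : ℝ := (g w + c * f w - (g w₀ + c * f w₀)) / (-c) with hε
    have hεpos : 0 < ε := by
      apply div_pos; linarith; linarith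
    have hmem : ((w : W), f w + ε) ∈ s := by simp [hs]; linarith
    have h2 := hF _ hmem
    rw [hsplit, hsplit] at h2
    have : (f w + ε) * c = f w * c + ε * c := by ring
    rw [this] at h2
    have hcne : c ≠ 0 := by linarith
    have hεc : ε * c = -(g w + c * f w - (g w₀ + c * f w₀)) := by
      rw [hε, div_mul_eq_mul_div, mul_div_assoc, div_neg, div_self hcne]
      ring
    nlinarith
  refine ⟨(-c)⁻¹ • g, fun w => ?_⟩
  have hkw := key w
  have hLval : ((-c)⁻¹ • g) (w - w₀) = (-c)⁻¹ * (g w - g w₀) := by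
    simp [map_sub, smul_eq_mul, mul_sub]
  rw [hLval]
  have hcpos : 0 < -c := by linarith
  have hcne : c ≠ 0 := by linarith
  rw [← sub_nonneg]
  have : f w - (f w₀ + (-c)⁻¹ * (g w - g w₀)) =
      ((-c) * (f w - f w₀) - (g w - g w₀)) / (-c) := by
    field_simp
    ring
  rw [this]
  apply div_nonneg _ (le_of_lt hcpos)
  nlinarith [hkw]

variable {H E : Type*} [NormedAddCommGroup H] [InnerProductSpace ℝ H]
    [NormedAddCommGroup E] [InnerProductSpace ℝ E]

lemma norm_comp_le_sqrt (x : H) (z : E) (u : H × E) :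
    ‖u - (x, z)‖ ≤ Real.sqrt (‖x - u.1‖ ^ 2 + ‖z - u.2‖ ^ 2) := by
  have h1 : ‖u - (x, z)‖ = max ‖u.1 - x‖ ‖u.2 - z‖ := rfl
  rw [h1]
  have hD : (0:ℝ) ≤ ‖x - u.1‖ ^ 2 + ‖z - u.2‖ ^ 2 := by positivity
  apply max_le
  · rw [show ‖u.1 - x‖ = ‖x - u.1‖ from norm_sub_rev _ _]
    exact Real.le_sqrt_of_sq_le (by nlinarith [sq_nonneg ‖z - u.2‖])
  · rw [show ‖u.2 - z‖ = ‖z - u.2‖ from norm_sub_rev _ _]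
    exact Real.le_sqrt_of_sq_le (by nlinarith [sq_nonneg ‖x - u.1‖])

lemma term_lower_r (S : H → E → ℝ) (L : (H × E) →L[ℝ] ℝ) (a : ℝ)
    (hL : ∀ u : H × E, a + L u ≤ S u.1 u.2) {lam : ℝ} (hlam : 0 < lam)
    (x : H) (z : E) (u : H × E) :
    a + L (x, z) + (Real.sqrt (‖x - u.1‖ ^ 2 + ‖z - u.2‖ ^ 2) ^ 2 / (2 * lam)
        - ‖L‖ * Real.sqrt (‖x - u.1‖ ^ 2 + ‖z - u.2‖ ^ 2)) ≤
      S u.1 u.2 + (‖x - u.1‖ ^ 2 + ‖z - u.2‖ ^ 2) / (2 * lam) := by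
  have hD : (0:ℝ) ≤ ‖x - u.1‖ ^ 2 + ‖z - u.2‖ ^ 2 := by positivity
  set r : ℝ := Real.sqrt (‖x - u.1‖ ^ 2 + ‖z - u.2‖ ^ 2) with hr
  have hr2 : r ^ 2 = ‖x - u.1‖ ^ 2 + ‖z - u.2‖ ^ 2 := Real.sq_sqrt hD
  have h1 : |L (u - (x, z))| ≤ ‖L‖ * r := by
    calc |L (u - (x, z))| ≤ ‖L‖ * ‖u - (x,z)‖ := L.le_opNorm _
      _ ≤ ‖L‖ * r := by
          apply mul_le_mul_of_nonneg_left (norm_comp_le_sqrt x z u) (norm_nonneg L)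
  have h2 : L u = L (x, z) + L (u - (x, z)) := by
    rw [map_sub]; ring
  have h3 := hL u
  have h4 : -(‖L‖ * r) ≤ L (u - (x, z)) := neg_le_of_abs_le h1
  rw [hr2]
  linarith [h2.le, h2.symm.le]

lemma term_lower (S : H → E → ℝ) (L : (H × E) →L[ℝ] ℝ) (a : ℝ)
    (hL : ∀ u : H × E, a + L u ≤ S u.1 u.2) {lam : ℝ} (hlam : 0 < lam)
    (x : H) (z : E) (u : H × E) :
    a + L (x, z) - lam * ‖L‖ ^ 2 / 2 ≤
      S u.1 u.2 + (‖x - u.1‖ ^ 2 + ‖z - u.2‖ ^ 2) / (2 * lam) := by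
  have hD : (0:ℝ) ≤ ‖x - u.1‖ ^ 2 + ‖z - u.2‖ ^ 2 := by positivity
  have hmain := term_lower_r S L a hL hlam x z u
  have h5 := quad_bound hlam ‖L‖ (Real.sqrt (‖x - u.1‖ ^ 2 + ‖z - u.2‖ ^ 2))
  rw [Real.sq_sqrt hD] at h5 hmain
  linarith

lemma moreau_bddBelow (S : H → E → ℝ) (L : (H × E) →L[ℝ] ℝ) (a : ℝ)
    (hL : ∀ u : H × E, a + L u ≤ S u.1 u.2) {lam : ℝ} (hlam : 0 < lam) (x : H) (z : E) :
    BddBelow (Set.range fun u : H × E =>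
      S u.1 u.2 + (‖x - u.1‖ ^ 2 + ‖z - u.2‖ ^ 2) / (2 * lam)) := by
  refine ⟨a + L (x, z) - lam * ‖L‖ ^ 2 / 2, ?_⟩
  rintro _ ⟨u, rfl⟩
  exact term_lower S L a hL hlam x z u

lemma moreau_lower (S : H → E → ℝ) (L : (H × E) →L[ℝ] ℝ) (a : ℝ)
    (hL : ∀ u : H × E, a + L u ≤ S u.1 u.2) {lam : ℝ} (hlam : 0 < lam) (x : H) (z : E) :
    a + L (x, z) - lam * ‖L‖ ^ 2 / 2 ≤ moreauEnv2 S lam x z :=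
  le_ciInf (term_lower S L a hL hlam x z)

lemma moreau_le_self (S : H → E → ℝ) (L : (H × E) →L[ℝ] ℝ) (a : ℝ)
    (hL : ∀ u : H × E, a + L u ≤ S u.1 u.2) {lam : ℝ} (hlam : 0 < lam) (x : H) (z : E) :
    moreauEnv2 S lam x z ≤ S x z := by
  have := ciInf_le (moreau_bddBelow S L a hL hlam x z) ((x, z) : H × E)
  simpa [moreauEnv2] using this


set_option maxHeartbeats 1000000 in
lemma isClosed_moreau_sublevel (S : H → E → ℝ) (L : (H × E) →L[ℝ] ℝ) (a : ℝ)
    (hL : ∀ u : H × E, a + L u ≤ S u.1 u.2) {lam : ℝ} (hlam : 0 < lam) (x : H) (c : ℝ) :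
    IsClosed {z : E | moreauEnv2 S lam x z ≤ c} := by
  rw [← isOpen_compl_iff, Metric.isOpen_iff]
  intro z₀ hz₀
  have hc : c < moreauEnv2 S lam x z₀ := lt_of_not_ge hz₀
  set M₀ : ℝ := moreauEnv2 S lam x z₀ with hM₀
  clear_value M₀
  set c' : ℝ := (c + M₀) / 2 with hc'
  clear_value c'
  have hcc' : c < c' := by rw [hc']; linarith
  have hc'M : c' < M₀ := by rw [hc']; linarith
  set K₀ : ℝ := a + L (x, z₀) - ‖L‖ with hK₀
  clear_value K₀
  have claimA : ∀ z : E, ‖z - z₀‖ ≤ 1 → K₀ ≤ a + L (x, z) := by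
    intro z hz
    have h1 : L (x, z) = L (x, z₀) + L ((0 : H), z - z₀) := by
      rw [← map_add]
      congr 1
      simp [Prod.ext_iff]
    have h2 : |L ((0 : H), z - z₀)| ≤ ‖L‖ * 1 := by
      calc |L ((0 : H), z - z₀)| ≤ ‖L‖ * ‖((0 : H), z - z₀)‖ := L.le_opNorm _
        _ ≤ ‖L‖ * 1 := by
            apply mul_le_mul_of_nonneg_left _ (norm_nonneg L)
            have : ‖((0 : H), z - z₀)‖ = max ‖(0 : H)‖ ‖z - z₀‖ := rfl
            rw [this]
            simp only [norm_zero]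
            exact max_le (by norm_num) hz
    have := neg_le_of_abs_le h2
    rw [hK₀, h1]
    linarith
  set s0 : ℝ := Real.sqrt (4 * lam * |c' - K₀|) with hs0
  clear_value s0
  set R₀ : ℝ := 4 * lam * ‖L‖ + s0 + 1 with hR₀
  clear_value R₀
  have hs0nn : 0 ≤ s0 := by rw [hs0]; exact Real.sqrt_nonneg _
  have hLnn : (0:ℝ) ≤ 4 * lam * ‖L‖ := by positivity
  have hR₀1 : 1 ≤ R₀ := by rw [hR₀]; linarith
  have claimB : ∀ r : ℝ, R₀ ≤ r → c' ≤ K₀ + (r ^ 2 / (2 * lam) - ‖L‖ * r) := by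
    intro r hrR
    have hr0 : 0 ≤ r := by linarith
    have hs02 : s0 ^ 2 = 4 * lam * |c' - K₀| := by rw [hs0]; exact Real.sq_sqrt (by positivity)
    have h1 : 4 * lam * ‖L‖ * r ≤ r ^ 2 := by nlinarith
    have h2 : 4 * lam * (c' - K₀) ≤ r ^ 2 := by
      have : 4 * lam * (c' - K₀) ≤ 4 * lam * |c' - K₀| := by
        have := le_abs_self (c' - K₀); nlinarith
      nlinarith
    have h3 : (c' - K₀ + ‖L‖ * r) * (2 * lam) ≤ r ^ 2 := by nlinarith
    have h4 : c' - K₀ + ‖L‖ * r ≤ r ^ 2 / (2 * lam) :=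
      (le_div_iff₀ (by linarith : (0:ℝ) < 2 * lam)).mpr h3
    linarith
  have hbdd := moreau_bddBelow S L a hL hlam x
  set δ : ℝ := min 1 ((M₀ - c') * lam / (2 * R₀ + 2)) with hδ
  clear_value δ
  have hδpos : 0 < δ := by
    rw [hδ]
    apply lt_min one_pos
    apply div_pos (by nlinarith) (by linarith)
  have hδ1 : δ ≤ 1 := by rw [hδ]; exact min_le_left _ _
  have hδ2 : δ ≤ (M₀ - c') * lam / (2 * R₀ + 2) := by rw [hδ]; exact min_le_right _ _
  refine ⟨δ, hδpos, fun z hz => ?_⟩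
  rw [Metric.mem_ball, dist_eq_norm] at hz
  have hz1 : ‖z - z₀‖ ≤ 1 := le_trans hz.le hδ1
  have hmain : c' ≤ moreauEnv2 S lam x z := by
    apply le_ciInf
    intro u
    set D : ℝ := ‖x - u.1‖ ^ 2 + ‖z - u.2‖ ^ 2 with hD
    clear_value D
    have hDnn : (0:ℝ) ≤ D := by rw [hD]; positivity
    set r : ℝ := Real.sqrt D with hrdef
    clear_value r
    rcases le_or_gt R₀ r with hfar | hnear
    · -- far case
      have h1 := term_lower_r S L a hL hlam x z u
      rw [← hD, ← hrdef] at h1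
      have hr2 : r ^ 2 = D := by rw [hrdef]; exact Real.sq_sqrt hDnn
      rw [hr2] at h1
      have h2 := claimB r hfar
      rw [hr2] at h2
      have h3 := claimA z hz1
      linarith
    · -- near case
      have hzu : ‖z - u.2‖ ≤ r := by
        rw [hrdef, hD]
        exact Real.le_sqrt_of_sq_le (by nlinarith [sq_nonneg ‖x - u.1‖])
      have hzunn : (0:ℝ) ≤ ‖z - u.2‖ := norm_nonneg _
      have hz0u : ‖z₀ - u.2‖ ≤ δ + R₀ := by
        calc ‖z₀ - u.2‖ = ‖(z₀ - z) + (z - u.2)‖ := by rw [sub_add_sub_cancel]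
          _ ≤ ‖z₀ - z‖ + ‖z - u.2‖ := norm_add_le _ _
          _ ≤ δ + R₀ := by
              have : ‖z₀ - z‖ = ‖z - z₀‖ := norm_sub_rev _ _
              rw [this]
              linarith
      have hMle : M₀ ≤ S u.1 u.2 + (‖x - u.1‖ ^ 2 + ‖z₀ - u.2‖ ^ 2) / (2 * lam) := by
        rw [hM₀]
        exact ciInf_le (hbdd z₀) u
      have hdiffbound : ‖z₀ - u.2‖ ^ 2 - ‖z - u.2‖ ^ 2 ≤ (2 * R₀ + 2) * δ := by
        have hAB : ‖z₀ - u.2‖ - ‖z - u.2‖ ≤ δ := by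
          have : ‖z₀ - u.2‖ ≤ ‖z₀ - z‖ + ‖z - u.2‖ := by
            calc ‖z₀ - u.2‖ = ‖(z₀ - z) + (z - u.2)‖ := by rw [sub_add_sub_cancel]
              _ ≤ ‖z₀ - z‖ + ‖z - u.2‖ := norm_add_le _ _
          have h2 : ‖z₀ - z‖ = ‖z - z₀‖ := norm_sub_rev _ _
          linarith [hz.le, h2 ▸ this]
        have hsum : ‖z₀ - u.2‖ + ‖z - u.2‖ ≤ 2 * R₀ + 2 := by
          have : δ ≤ 1 := hδ1
          linarith
        have hsumnn : (0:ℝ) ≤ ‖z₀ - u.2‖ + ‖z - u.2‖ := by positivity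
        nlinarith [hδpos.le]
      have hδsmall : (2 * R₀ + 2) * δ / (2 * lam) ≤ (M₀ - c') / 2 := by
        have h2 : (0:ℝ) < 2 * R₀ + 2 := by linarith
        have h1 : (2 * R₀ + 2) * δ ≤ (M₀ - c') * lam := by
          have h3 := mul_le_mul_of_nonneg_left hδ2 h2.le
          have h4 : (2 * R₀ + 2) * ((M₀ - c') * lam / (2 * R₀ + 2)) = (M₀ - c') * lam := by
            field_simp
          linarith
        have hlam' : lam ≠ 0 := ne_of_gt hlam
        calc (2 * R₀ + 2) * δ / (2 * lam) ≤ (M₀ - c') * lam / (2 * lam) :=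
              (div_le_div_iff_of_pos_right (by linarith : (0:ℝ) < 2 * lam)).mpr h1
          _ = (M₀ - c') / 2 := by
              rw [mul_comm 2 lam, ← div_div, mul_div_assoc, div_self hlam', mul_one]
      have hfz : S u.1 u.2 + D / (2 * lam) ≥ M₀ - (M₀ - c') / 2 := by
        have hkey : (‖z₀ - u.2‖ ^ 2 - ‖z - u.2‖ ^ 2) / (2 * lam) ≤ (M₀ - c') / 2 := by
          calc (‖z₀ - u.2‖ ^ 2 - ‖z - u.2‖ ^ 2) / (2 * lam)
              ≤ (2 * R₀ + 2) * δ / (2 * lam) :=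
                (div_le_div_iff_of_pos_right (by linarith : (0:ℝ) < 2 * lam)).mpr hdiffbound
            _ ≤ (M₀ - c') / 2 := hδsmall
        have hsplit : (‖x - u.1‖ ^ 2 + ‖z₀ - u.2‖ ^ 2) / (2 * lam)
            = D / (2 * lam) + (‖z₀ - u.2‖ ^ 2 - ‖z - u.2‖ ^ 2) / (2 * lam) := by
          rw [hD]; ring
        rw [hsplit] at hMle
        linarith
      calc c' = M₀ - (M₀ - c') / 2 - (M₀ - c') / 2 := by ring
        _ ≤ M₀ - (M₀ - c') / 2 := by linarith
        _ ≤ S u.1 u.2 + D / (2 * lam) := hfz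
  intro hmem
  exact absurd (le_trans hmain hmem) (not_le.mpr hcc')

end Aux

/-- Theorem 3.1(c): if `x ∈ 𝒟 = {x | ∃ z, S(x,z) < h(x)}`, then for any `λ_k → 0⁺` and
`x_k → x` strongly, `φ_{λ_k}(x_k) → φ(x)`. -/
theorem stmt7
    {H Y : Type*} [NormedAddCommGroup H] [InnerProductSpace ℝ H] [CompleteSpace H]
    [SecondCountableTopology H]
    [NormedAddCommGroup Y] [NormedSpace ℝ Y] [CompleteSpace Y] {m : ℕ}
    {Ω : Type*} [MeasurableSpace Ω] (P : Measure Ω) [IsProbabilityMeasure P]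
    (ξ : Ω → EuclideanSpace ℝ (Fin m)) (hξ : Measurable ξ)
    (hlaw : P.map ξ ≪ volume)
    (K : Set Y) (hKne : K.Nonempty) (hKcl : IsClosed K) (hKconv : Convex ℝ K)
    (hKcone : ∀ c : ℝ, 0 ≤ c → ∀ y ∈ K, c • y ∈ K)
    (C : Set (WeakDual ℝ Y)) (hCne : C.Nonempty) (hCconv : Convex ℝ C) (hCcpt : IsCompact C)
    (hCgen : closure {w : WeakDual ℝ Y | ∃ c : ℝ, 0 ≤ c ∧ ∃ v ∈ C, w = c • v}
      = {w : WeakDual ℝ Y | ∀ y ∈ K, 0 ≤ w y})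
    (Φ : H → EuclideanSpace ℝ (Fin m) → Y)
    (hΦ : Continuous fun q : H × EuclideanSpace ℝ (Fin m) => Φ q.1 q.2)
    (h : H → ℝ) (hconv : ConvexOn ℝ Set.univ h) (hC1 : ContDiff ℝ 1 h)
    (hscal : ∀ v ∈ C, ConvexOn ℝ Set.univ
      (fun q : H × EuclideanSpace ℝ (Fin m) => v (Φ q.1 q.2) + h q.1))
    (S : H → EuclideanSpace ℝ (Fin m) → ℝ)
    (hS : ∀ x z, S x z = ⨆ v : C, ((v : WeakDual ℝ Y) (Φ x z) + h x))
    (φ : H → ℝ)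
    (hφ : ∀ x, φ x = (P {ω | S x (ξ ω) ≤ h x}).toReal)
    (φl : ℝ → H → ℝ)
    (hφl : ∀ lam x, φl lam x = (P {ω | moreauEnv2 S lam x (ξ ω) ≤ h x}).toReal)
    :
    ∀ lam : ℕ → ℝ, (∀ k, 0 < lam k) → Tendsto lam atTop (𝓝 0) →
    ∀ (x : ℕ → H) (x₀ : H), Tendsto x atTop (𝓝 x₀) →
      (∃ z : EuclideanSpace ℝ (Fin m), S x₀ z < h x₀) →
      Tendsto (fun k => φl (lam k) (x k)) atTop (𝓝 (φ x₀)) := by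
  classical
  intro lam hlampos hlam0 x x₀ hx hSlater
  obtain ⟨z₀, hz₀slater⟩ := hSlater
  haveI : Nonempty C := hCne.to_subtype
  -- bounded above ranges
  have hbddT : ∀ y : Y, BddAbove (Set.range fun v : C => (v : WeakDual ℝ Y) y) := by
    intro y
    have himg : ((fun w : WeakDual ℝ Y => w y) '' C) = Set.range fun v : C => (v : WeakDual ℝ Y) y :=
      Set.image_eq_range _ _
    rw [← himg]
    exact (hCcpt.image (WeakDual.eval_continuous y)).bddAbove
  have hbdd2 : ∀ (x' : H) (z : EuclideanSpace ℝ (Fin m)),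
      BddAbove (Set.range fun v : C => ((v : WeakDual ℝ Y) (Φ x' z) + h x')) := by
    intro x' z
    have himg : ((fun w : WeakDual ℝ Y => w (Φ x' z) + h x') '' C)
        = Set.range fun v : C => ((v : WeakDual ℝ Y) (Φ x' z) + h x') :=
      Set.image_eq_range _ _
    rw [← himg]
    exact (hCcpt.image ((WeakDual.eval_continuous (Φ x' z)).add continuous_const)).bddAbove
  -- uniform operator norm bound on C
  obtain ⟨Mb, hMb⟩ : ∃ Mb : ℝ, ∀ v : C,
      ‖WeakDual.toStrongDual (v : WeakDual ℝ Y)‖ ≤ Mb := by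
    apply banach_steinhaus
    intro y
    obtain ⟨Cb, hCb⟩ := (hCcpt.image ((WeakDual.eval_continuous y).norm)).bddAbove
    refine ⟨Cb, fun v => ?_⟩
    have := hCb (Set.mem_image_of_mem (fun w : WeakDual ℝ Y => ‖w y‖) v.2)
    simpa using this
  have hMb0 : 0 ≤ Mb := le_trans (norm_nonneg _) (hMb ⟨hCne.choose, hCne.choose_spec⟩)
  -- the support function T of C
  set T : Y → ℝ := fun y => ⨆ v : C, (v : WeakDual ℝ Y) y with hTdef
  have hTle : ∀ y y' : Y, T y ≤ T y' + Mb * ‖y - y'‖ := by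
    intro y y'
    apply ciSup_le
    intro v
    have h1 : (v : WeakDual ℝ Y) y = (v : WeakDual ℝ Y) y' + (v : WeakDual ℝ Y) (y - y') := by
      rw [map_sub]; ring
    have h3 : ‖WeakDual.toStrongDual (v : WeakDual ℝ Y) (y - y')‖
        ≤ ‖WeakDual.toStrongDual (v : WeakDual ℝ Y)‖ * ‖y - y'‖ :=
      ContinuousLinearMap.le_opNorm _ _
    have h4 : (v : WeakDual ℝ Y) (y - y') ≤ Mb * ‖y - y'‖ := by
      have h5 : (v : WeakDual ℝ Y) (y - y') ≤ ‖WeakDual.toStrongDual (v : WeakDual ℝ Y) (y - y')‖ := by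
        have : WeakDual.toStrongDual (v : WeakDual ℝ Y) (y - y') = (v : WeakDual ℝ Y) (y - y') := rfl
        rw [this]
        exact le_abs_self _
      have h6 : ‖WeakDual.toStrongDual (v : WeakDual ℝ Y)‖ * ‖y - y'‖ ≤ Mb * ‖y - y'‖ :=
        mul_le_mul_of_nonneg_right (hMb v) (norm_nonneg _)
      linarith
    have h7 : (v : WeakDual ℝ Y) y' ≤ T y' := le_ciSup (hbddT y') v
    linarith
  have hTcont : Continuous T := by
    have hlip : LipschitzWith (Real.toNNReal Mb) T := by
      apply LipschitzWith.of_dist_le_mul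
      intro y y'
      rw [Real.dist_eq, dist_eq_norm, Real.coe_toNNReal Mb hMb0]
      have h1 := hTle y y'
      have h2 := hTle y' y
      rw [norm_sub_rev] at h2
      rw [abs_sub_le_iff]
      exact ⟨by linarith, by linarith⟩
    exact hlip.continuous
  have hST : ∀ (x' : H) (z : EuclideanSpace ℝ (Fin m)), S x' z = T (Φ x' z) + h x' := by
    intro x' z
    rw [hS]
    apply le_antisymm
    · apply ciSup_le
      intro v
      have := le_ciSup (hbddT (Φ x' z)) v
      linarith
    · have hle : T (Φ x' z) ≤ (⨆ v : C, ((v : WeakDual ℝ Y) (Φ x' z) + h x')) - h x' := by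
        apply ciSup_le
        intro v
        have := le_ciSup (hbdd2 x' z) v
        linarith
      linarith
  have hScont : Continuous fun q : H × EuclideanSpace ℝ (Fin m) => S q.1 q.2 := by
    have heq : (fun q : H × EuclideanSpace ℝ (Fin m) => S q.1 q.2)
        = fun q => T (Φ q.1 q.2) + h q.1 := funext fun q => hST q.1 q.2
    rw [heq]
    exact (hTcont.comp hΦ).add (hC1.continuous.comp continuous_fst)
  have hSconv : ConvexOn ℝ Set.univ (fun q : H × EuclideanSpace ℝ (Fin m) => S q.1 q.2) := by
    refine ⟨convex_univ, fun p _ q _ a b ha hb hab => ?_⟩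
    simp only
    rw [hS, hS, hS]
    apply ciSup_le
    intro v
    have hcv := (hscal v v.2).2 (Set.mem_univ p) (Set.mem_univ q) ha hb hab
    simp only [smul_eq_mul] at hcv ⊢
    have h1 := le_ciSup (hbdd2 p.1 p.2) v
    have h2 := le_ciSup (hbdd2 q.1 q.2) v
    have h3 : a * ((v : WeakDual ℝ Y) (Φ p.1 p.2) + h p.1)
        ≤ a * (⨆ v : C, ((v : WeakDual ℝ Y) (Φ p.1 p.2) + h p.1)) :=
      mul_le_mul_of_nonneg_left h1 ha
    have h4 : b * ((v : WeakDual ℝ Y) (Φ q.1 q.2) + h q.1)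
        ≤ b * (⨆ v : C, ((v : WeakDual ℝ Y) (Φ q.1 q.2) + h q.1)) :=
      mul_le_mul_of_nonneg_left h2 hb
    linarith
  -- global affine minorant
  obtain ⟨L₀, hL₀⟩ := exists_affine_minorant hSconv hScont ((x₀, z₀) : H × EuclideanSpace ℝ (Fin m))
  have hL₀' : ∀ u : H × EuclideanSpace ℝ (Fin m),
      (S x₀ z₀ - L₀ (x₀, z₀)) + L₀ u ≤ S u.1 u.2 := by
    intro u
    have := hL₀ u
    rw [map_sub] at this
    dsimp only at this
    linarith
  -- convexity of the slice z ↦ S x₀ z - h x₀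
  have hgconv : ConvexOn ℝ Set.univ (fun z : EuclideanSpace ℝ (Fin m) => S x₀ z - h x₀) := by
    refine ⟨convex_univ, fun za _ zb _ a b ha hb hab => ?_⟩
    have hkey : a • ((x₀, za) : H × EuclideanSpace ℝ (Fin m)) + b • ((x₀, zb) : H × EuclideanSpace ℝ (Fin m))
        = (x₀, a • za + b • zb) := by
      have : a • x₀ + b • x₀ = x₀ := by rw [← add_smul, hab, one_smul]
      simp [Prod.ext_iff, this]
    have hcomb := hSconv.2 (Set.mem_univ ((x₀, za) : H × EuclideanSpace ℝ (Fin m)))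
      (Set.mem_univ ((x₀, zb) : H × EuclideanSpace ℝ (Fin m))) ha hb hab
    rw [hkey] at hcomb
    dsimp only at hcomb ⊢
    simp only [smul_eq_mul] at hcomb ⊢
    have hexp : a * (S x₀ za - h x₀) + b * (S x₀ zb - h x₀)
        = a * S x₀ za + b * S x₀ zb - (a + b) * h x₀ := by ring
    rw [hab, one_mul] at hexp
    linarith
  have hgcont : Continuous fun z : EuclideanSpace ℝ (Fin m) => S x₀ z :=
    hScont.comp (Continuous.prodMk_right x₀)
  set U : Set (EuclideanSpace ℝ (Fin m)) := {z | S x₀ z < h x₀} with hUdef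
  have hUopen : IsOpen U := isOpen_lt hgcont continuous_const
  have hUconv : Convex ℝ U := by
    have := hgconv.convex_lt 0
    simp only [Set.sep_univ] at this
    have heq : {z : EuclideanSpace ℝ (Fin m) | S x₀ z - h x₀ < 0} = U := by
      ext z; simp [hUdef, sub_neg]
    rwa [heq] at this
  have hfront : volume (frontier U) = 0 := hUconv.addHaar_frontier volume
  have hNsub : {z : EuclideanSpace ℝ (Fin m) | S x₀ z = h x₀} ⊆ frontier U := by
    intro z hz
    have hz' : S x₀ z = h x₀ := hz
    constructor
    · -- in closure
      have htend : Tendsto (fun n : ℕ => (1 / ((n : ℝ) + 1)) • z₀ + (1 - 1 / ((n : ℝ) + 1)) • z)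
          atTop (𝓝 z) := by
        have h0 : Tendsto (fun n : ℕ => 1 / ((n : ℝ) + 1)) atTop (𝓝 0) :=
          tendsto_one_div_add_atTop_nhds_zero_nat
        have h1 := h0.smul_const z₀
        have h2 := ((tendsto_const_nhds : Tendsto (fun _ : ℕ => (1:ℝ)) atTop (𝓝 1)).sub h0).smul_const z
        have := h1.add h2
        simpa using this
      apply mem_closure_of_tendsto htend
      filter_upwards with n
      show S x₀ ((1 / ((n : ℝ) + 1)) • z₀ + (1 - 1 / ((n : ℝ) + 1)) • z) < h x₀
      set t : ℝ := 1 / ((n : ℝ) + 1) with htdef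
      have ht0 : 0 < t := by positivity
      have ht1 : t ≤ 1 := by
        rw [htdef]
        rw [div_le_one (by positivity)]
        linarith [Nat.cast_nonneg (α := ℝ) n]
      have := hgconv.2 (Set.mem_univ z₀) (Set.mem_univ z) ht0.le
        (by linarith : (0:ℝ) ≤ 1 - t) (by ring)
      dsimp only at this
      simp only [smul_eq_mul] at this
      nlinarith [this, hz₀slater, hz']
    · -- not in interior
      rw [hUopen.interior_eq]
      simp only [hUdef, Set.mem_setOf_eq, not_lt]
      linarith [hz'.ge]
  have hNnull : P {ω | S x₀ (ξ ω) = h x₀} = 0 := by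
    have hfm : MeasurableSet (frontier U) := isClosed_frontier.measurableSet
    have h1 : P (ξ ⁻¹' frontier U) = (P.map ξ) (frontier U) :=
      (MeasureTheory.Measure.map_apply hξ hfm).symm
    have h2 : (P.map ξ) (frontier U) = 0 := hlaw hfront
    have h3 : P {ω | S x₀ (ξ ω) = h x₀} ≤ P (ξ ⁻¹' frontier U) :=
      measure_mono (fun ω hω => hNsub hω)
    exact le_antisymm (le_trans h3 (le_of_eq (h1.trans h2))) zero_le
  -- measurability of the sets
  have hAkmeas : ∀ k, MeasurableSet {ω | moreauEnv2 S (lam k) (x k) (ξ ω) ≤ h (x k)} := by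
    intro k
    have hcl : IsClosed {z : EuclideanSpace ℝ (Fin m) | moreauEnv2 S (lam k) (x k) z ≤ h (x k)} :=
      isClosed_moreau_sublevel S L₀ _ hL₀' (hlampos k) (x k) (h (x k))
    exact hξ hcl.measurableSet
  have hAmeas : MeasurableSet {ω | S x₀ (ξ ω) ≤ h x₀} := by
    have hcl : IsClosed {z : EuclideanSpace ℝ (Fin m) | S x₀ z ≤ h x₀} :=
      isClosed_le hgcont continuous_const
    exact hξ hcl.measurableSet
  -- pointwise a.e. convergence of indicators
  have hptwise : ∀ᵐ ω ∂P, Tendsto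
      (fun k => ({ω' | moreauEnv2 S (lam k) (x k) (ξ ω') ≤ h (x k)}.indicator
        (fun _ => (1:ℝ)) ω)) atTop
      (𝓝 ({ω' | S x₀ (ξ ω') ≤ h x₀}.indicator (fun _ => (1:ℝ)) ω)) := by
    have hne : ∀ᵐ ω ∂P, S x₀ (ξ ω) ≠ h x₀ := by
      rw [ae_iff]
      simp only [ne_eq, not_not]
      exact hNnull
    filter_upwards [hne] with ω hω
    have ht2 : Tendsto (fun k => h (x k)) atTop (𝓝 (h x₀)) :=
      (hC1.continuous.tendsto x₀).comp hx
    rcases lt_or_gt_of_ne hω with hlt | hgt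
    · -- S x₀ (ξ ω) < h x₀ : indicators eventually 1
      have ht1 : Tendsto (fun k => S (x k) (ξ ω)) atTop (𝓝 (S x₀ (ξ ω))) := by
        have := hScont.tendsto ((x₀, ξ ω) : H × EuclideanSpace ℝ (Fin m))
        exact this.comp (hx.prodMk_nhds tendsto_const_nhds)
      have hev : ∀ᶠ k in atTop, moreauEnv2 S (lam k) (x k) (ξ ω) ≤ h (x k) := by
        have hdiff : Tendsto (fun k => S (x k) (ξ ω) - h (x k)) atTop
            (𝓝 (S x₀ (ξ ω) - h x₀)) := ht1.sub ht2
        have := hdiff.eventually_lt_const (show S x₀ (ξ ω) - h x₀ < 0 by linarith)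
        filter_upwards [this] with k hk
        exact le_trans (moreau_le_self S L₀ _ hL₀' (hlampos k) (x k) (ξ ω)) (by linarith)
      rw [Set.indicator_of_mem (show ω ∈ {ω' | S x₀ (ξ ω') ≤ h x₀} from hlt.le)]
      refine Tendsto.congr' ?_ tendsto_const_nhds
      filter_upwards [hev] with k hk
      exact (Set.indicator_of_mem
        (show ω ∈ {ω' | moreauEnv2 S (lam k) (x k) (ξ ω') ≤ h (x k)} from hk)
        (fun _ => (1:ℝ))).symm
    · -- S x₀ (ξ ω) > h x₀ : indicators eventually 0
      obtain ⟨L, hL⟩ := exists_affine_minorant hSconv hScont ((x₀, ξ ω) : H × EuclideanSpace ℝ (Fin m))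
      have hL' : ∀ u : H × EuclideanSpace ℝ (Fin m),
          (S x₀ (ξ ω) - L (x₀, ξ ω)) + L u ≤ S u.1 u.2 := by
        intro u
        have := hL u
        rw [map_sub] at this
        dsimp only at this
        linarith
      have hlow : ∀ k, (S x₀ (ξ ω) - L (x₀, ξ ω)) + L (x k, ξ ω) - lam k * ‖L‖ ^ 2 / 2
          ≤ moreauEnv2 S (lam k) (x k) (ξ ω) :=
        fun k => moreau_lower S L _ hL' (hlampos k) (x k) (ξ ω)
      have hL1 : Tendsto (fun k => L ((x k, ξ ω) : H × EuclideanSpace ℝ (Fin m))) atTop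
          (𝓝 (L (x₀, ξ ω))) :=
        (L.continuous.tendsto _).comp (hx.prodMk_nhds tendsto_const_nhds)
      have hL2 : Tendsto (fun k => lam k * ‖L‖ ^ 2 / 2) atTop (𝓝 0) := by
        have := (hlam0.mul_const (‖L‖ ^ 2)).div_const 2
        simpa using this
      have ht1 : Tendsto (fun k => (S x₀ (ξ ω) - L (x₀, ξ ω)) + L ((x k, ξ ω) : H × EuclideanSpace ℝ (Fin m))
          - lam k * ‖L‖ ^ 2 / 2) atTop (𝓝 (S x₀ (ξ ω))) := by
        have := ((tendsto_const_nhds : Tendsto (fun _ : ℕ => S x₀ (ξ ω) - L (x₀, ξ ω)) atTop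
          (𝓝 (S x₀ (ξ ω) - L (x₀, ξ ω)))).add hL1).sub hL2
        simpa using this
      have hev := ht2.eventually_lt ht1 hgt
      rw [Set.indicator_of_notMem (show ω ∉ {ω' | S x₀ (ξ ω') ≤ h x₀} by
        simp only [Set.mem_setOf_eq, not_le]; exact hgt)]
      refine Tendsto.congr' ?_ tendsto_const_nhds
      filter_upwards [hev] with k hk
      have hnot : ¬ (moreauEnv2 S (lam k) (x k) (ξ ω) ≤ h (x k)) :=
        not_le.mpr (lt_of_lt_of_le hk (hlow k))
      exact (Set.indicator_of_notMem
        (show ω ∉ {ω' | moreauEnv2 S (lam k) (x k) (ξ ω') ≤ h (x k)} from hnot)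
        (fun _ => (1:ℝ))).symm
  -- dominated convergence
  have hint : Tendsto
      (fun k => ∫ ω, ({ω' | moreauEnv2 S (lam k) (x k) (ξ ω') ≤ h (x k)}.indicator
        (fun _ => (1:ℝ)) ω) ∂P) atTop
      (𝓝 (∫ ω, ({ω' | S x₀ (ξ ω') ≤ h x₀}.indicator (fun _ => (1:ℝ)) ω) ∂P)) := by
    apply tendsto_integral_of_dominated_convergence (fun _ => (1:ℝ))
    · intro k
      exact (stronglyMeasurable_const.indicator (hAkmeas k)).aestronglyMeasurable
    · exact integrable_const 1
    · intro k
      filter_upwards with ω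
      by_cases hmem : ω ∈ {ω' | moreauEnv2 S (lam k) (x k) (ξ ω') ≤ h (x k)}
      · rw [Set.indicator_of_mem hmem]; simp
      · rw [Set.indicator_of_notMem hmem]; simp
    · exact hptwise
  have heq1 : ∀ k, ∫ ω, ({ω' | moreauEnv2 S (lam k) (x k) (ξ ω') ≤ h (x k)}.indicator
      (fun _ => (1:ℝ)) ω) ∂P = φl (lam k) (x k) := by
    intro k
    rw [hφl (lam k) (x k), integral_indicator_const (1:ℝ) (hAkmeas k), smul_eq_mul, mul_one]; rfl
  have heq2 : ∫ ω, ({ω' | S x₀ (ξ ω') ≤ h x₀}.indicator (fun _ => (1:ℝ)) ω) ∂P = φ x₀ := by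
    rw [hφ x₀, integral_indicator_const (1:ℝ) hAmeas, smul_eq_mul, mul_one]; rfl
  rw [← heq2]
  exact hint.congr heq1
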